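/- Let Ω ⊂ ℝ^d be a bounded open set, S := ℝ^d∖Ω, and let v: Ω → [0,1] be measurable, extended by 0 to ℝ^d. Let h ∈ (0,1] and suppose (1/√h) ∫_Ω (1 − v)(K_h * v) dx ≤ C₁ and (1/√h) ∫_Ω ∫_{ℝ^d} 1_S(x+y) K_h(y) v(x) dy dx ≤ C₂. Then there exists a constant c > 0 depending only on d, a, b, c_K, C₁ and C₂ (and not on v or h) such that ∫_Ω v(1 − v) dx ≤ c √h. -/

import Mathlib

open MeasureTheory Filter

/-- The rescaled kernel `K_h(x) = h^{-d/2} K(x/√h)`. -/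
noncomputable def scaledKernel {d : ℕ} (K : EuclideanSpace ℝ (Fin d) → ℝ) (h : ℝ)
    (x : EuclideanSpace ℝ (Fin d)) : ℝ :=
  h ^ (-(d : ℝ) / 2) * K ((Real.sqrt h)⁻¹ • x)

/-- Convolution over `ℝ^d`: `(f * g)(x) = ∫ f(x-y) g(y) dy`. -/
noncomputable def convK {d : ℕ} (f g : EuclideanSpace ℝ (Fin d) → ℝ)
    (x : EuclideanSpace ℝ (Fin d)) : ℝ :=
  ∫ y, f (x - y) * g y

/-- The approximate thresholding energy
`E_h(u) = (1/√h) ∫_Ω [ γ̃PV u K_h*(1_Ω - u) + γ̃SP u K_h*1_S + γ̃SV (1_Ω - u) K_h*1_S ] dx`,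
where `S = ℝ^d ∖ Ω = Ωᶜ`. -/
noncomputable def threshEnergy {d : ℕ} (Ω : Set (EuclideanSpace ℝ (Fin d)))
    (γPV γSP γSV K : EuclideanSpace ℝ (Fin d) → ℝ) (h : ℝ)
    (u : EuclideanSpace ℝ (Fin d) → ℝ) : ℝ :=
  (Real.sqrt h)⁻¹ * ∫ x in Ω,
    (γPV x * (u x * convK (scaledKernel K h) (fun y => Set.indicator Ω 1 y - u y) x)
      + γSP x * (u x * convK (scaledKernel K h) (Set.indicator Ωᶜ 1) x)
      + γSV x * ((Set.indicator Ω 1 x - u x) * convK (scaledKernel K h) (Set.indicator Ωᶜ 1) x))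

private lemma abs_int_le {α} [MeasurableSpace α] (μ : Measure α) (f : α → ℝ) :
    |∫ x, f x ∂μ| ≤ ∫ x, |f x| ∂μ := by
  simpa [Real.norm_eq_abs] using norm_integral_le_integral_norm (μ := μ) f

private lemma int_mul_bdd {α} [MeasurableSpace α] {μ : Measure α} {g f : α → ℝ}
    (hg : Integrable g μ) (hf : AEStronglyMeasurable f μ) (hb : ∀ x, |f x| ≤ 1) :
    Integrable (fun y => g y * f y) μ := by
  have := hg.bdd_mul (c := 1) hf (ae_of_all _ fun x => by simpa using hb x)
  simpa [mul_comm] using this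

set_option maxHeartbeats 2000000 in
/-- `∫_Ω v(1-v) dx ≤ c √h` whenever the rescaled interfacial and substrate terms
are bounded by `C₁` and `C₂`; the constant `c` depends only on `d, a, b, c_K, C₁, C₂`. -/
theorem interface_smallness (d : ℕ) (a b cK C1 C2 : ℝ)
    (ha : 0 < a) (hb : 0 < b) (hcK : 0 < cK) (hC1 : 0 ≤ C1) (hC2 : 0 ≤ C2) :
    ∃ c : ℝ, 0 < c ∧
      ∀ (K : EuclideanSpace ℝ (Fin d) → ℝ)
        (Ω : Set (EuclideanSpace ℝ (Fin d)))
        (v : EuclideanSpace ℝ (Fin d) → ℝ) (h : ℝ),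
        Measurable K → (∀ x, 0 ≤ K x) → (∀ x, K (-x) = K x) →
        Integrable K → (∫ x, K x) = 1 →
        (∀ x, ‖x‖ * K x ≤ cK * K ((2:ℝ)⁻¹ • x)) →
        (∀ x ∈ Metric.ball (0 : EuclideanSpace ℝ (Fin d)) b, a ≤ K x) →
        IsOpen Ω → Bornology.IsBounded Ω → MeasurableSet Ω →
        Measurable v → (∀ x, v x ∈ Set.Icc (0:ℝ) 1) → (∀ x ∉ Ω, v x = 0) →
        0 < h → h ≤ 1 →
        (Real.sqrt h)⁻¹ * (∫ x in Ω, (1 - v x) * convK (scaledKernel K h) v x) ≤ C1 →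
        (Real.sqrt h)⁻¹ *
          (∫ x in Ω, ∫ y, Set.indicator Ωᶜ 1 (x + y) * scaledKernel K h y * v x) ≤ C2 →
        ∫ x in Ω, v x * (1 - v x) ≤ c * Real.sqrt h := by
  refine ⟨C1 + C2 + 1, by positivity, ?_⟩
  intro K Ω v h hKm hK0 hKe hKi hK1 _ _ _ hΩb hΩm hvm hv01 hvs hh0 hh1 hE1 hE2
  have hs0 : 0 < Real.sqrt h := Real.sqrt_pos.2 hh0
  set Kh : EuclideanSpace ℝ (Fin d) → ℝ := scaledKernel K h with hKhdef
  have hKhm : Measurable Kh := by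
    unfold Kh; unfold scaledKernel
    exact (hKm.comp (measurable_const_smul _)).const_mul _
  have hKh0 : ∀ x, 0 ≤ Kh x := fun x =>
    mul_nonneg (Real.rpow_nonneg hh0.le _) (hK0 _)
  have hKhe : ∀ x, Kh (-x) = Kh x := by
    intro x
    unfold Kh; unfold scaledKernel
    rw [smul_neg, hKe]
  have hKhi : Integrable Kh := by
    unfold Kh; unfold scaledKernel
    exact (hKi.comp_smul (inv_ne_zero hs0.ne')).const_mul _
  have hKh1 : (∫ x, Kh x) = 1 := by
    unfold Kh; unfold scaledKernel
    rw [integral_const_mul,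
      MeasureTheory.Measure.integral_comp_inv_smul
        (volume (α := EuclideanSpace ℝ (Fin d))) K (Real.sqrt h),
      hK1, finrank_euclideanSpace, Fintype.card_fin, smul_eq_mul, mul_one,
      abs_of_nonneg (pow_nonneg hs0.le _), Real.sqrt_eq_rpow,
      ← Real.rpow_natCast (h ^ ((1:ℝ)/2)) d, ← Real.rpow_mul hh0.le, ← Real.rpow_add hh0,
      show -(d:ℝ)/2 + 1/2*(d:ℝ) = 0 by ring, Real.rpow_zero]
  have hv0 : ∀ x, 0 ≤ v x := fun x => (hv01 x).1
  have hv1 : ∀ x, v x ≤ 1 := fun x => (hv01 x).2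
  -- translated kernels
  have hTint : ∀ x, Integrable (fun y => Kh (x - y)) := fun x => hKhi.comp_sub_left x
  have hTint' : ∀ x, Integrable (fun y => Kh (y - x)) := fun x => hKhi.comp_sub_right x
  have hT1 : ∀ x, (∫ y, Kh (x - y)) = 1 := fun x => by
    rw [integral_sub_left_eq_self Kh volume x, hKh1]
  have hTv : ∀ x, Integrable (fun y => Kh (x - y) * v y) := fun x =>
    int_mul_bdd (hTint x) hvm.aestronglyMeasurable
      (fun y => abs_le.2 ⟨by linarith [hv0 y], by linarith [hv1 y]⟩)
  have hTd : ∀ x, Integrable (fun y => Kh (x - y) * (v x - v y)) := fun x =>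
    int_mul_bdd (hTint x) (measurable_const.sub hvm).aestronglyMeasurable
      (fun y => abs_le.2 ⟨by linarith [hv0 x, hv1 y], by linarith [hv1 x, hv0 y]⟩)
  -- finiteness of Ω
  have hμΩ : volume Ω < ⊤ := hΩb.measure_lt_top
  haveI : Fact (volume Ω < ⊤) := ⟨hμΩ⟩
  have bddInt : ∀ f : EuclideanSpace ℝ (Fin d) → ℝ, Measurable f → (∀ x, |f x| ≤ 1) →
      Integrable f (volume.restrict Ω) := fun f hm hbd =>
    (integrable_const (1:ℝ)).mono' hm.aestronglyMeasurable
      (ae_of_all _ fun x => by simpa using hbd x)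
  -- the convolution takes values in [0,1]
  have hconv0 : ∀ x, 0 ≤ convK Kh v x := fun x =>
    integral_nonneg fun y => mul_nonneg (hKh0 _) (hv0 _)
  have hconv1 : ∀ x, convK Kh v x ≤ 1 := by
    intro x
    calc (∫ y, Kh (x - y) * v y) ≤ ∫ y, Kh (x - y) :=
          integral_mono (hTv x) (hTint x) (fun y =>
            mul_le_of_le_one_right (hKh0 _) (hv1 y))
      _ = 1 := hT1 x
  have hconvm : Measurable fun x => convK Kh v x := by
    have : StronglyMeasurable fun p : EuclideanSpace ℝ (Fin d) × EuclideanSpace ℝ (Fin d) =>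
        Kh (p.1 - p.2) * v p.2 :=
      ((hKhm.comp (measurable_fst.sub measurable_snd)).mul
        (hvm.comp measurable_snd)).stronglyMeasurable
    exact this.integral_prod_right'.measurable
  -- the pointwise decomposition
  have hsplit : ∀ x, v x = convK Kh v x + (∫ y in Ω, Kh (x - y) * (v x - v y))
      + (∫ y in Ωᶜ, Kh (x - y) * v x) := by
    intro x
    have h1 : (∫ y, Kh (x - y) * (v x - v y)) = v x - convK Kh v x := by
      have e : (fun y => Kh (x - y) * (v x - v y))
          = fun y => Kh (x - y) * v x - Kh (x - y) * v y := by funext y; ring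
      rw [e, integral_sub ((hTint x).mul_const _) (hTv x), integral_mul_const, hT1 x, one_mul]
      rfl
    have h2 : (∫ y, Kh (x - y) * (v x - v y))
        = (∫ y in Ω, Kh (x - y) * (v x - v y)) + (∫ y in Ωᶜ, Kh (x - y) * (v x - v y)) :=
      (integral_add_compl hΩm (hTd x)).symm
    have h3 : (∫ y in Ωᶜ, Kh (x - y) * (v x - v y)) = ∫ y in Ωᶜ, Kh (x - y) * v x := by
      refine setIntegral_congr_fun hΩm.compl ?_
      intro y hy
      simp [hvs y hy]
    rw [h3] at h2
    linarith [h1, h2]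
  have keyInt : ∀ x, v x * (1 - v x)
      = (1 - v x) * convK Kh v x
        + (1 - v x) * (∫ y in Ω, Kh (x - y) * (v x - v y))
        + (1 - v x) * (∫ y in Ωᶜ, Kh (x - y) * v x) := by
    intro x
    linear_combination (1 - v x) * hsplit x
  -- bounds for second inner integral
  have hJ2abs : ∀ x, |∫ y in Ω, Kh (x - y) * (v x - v y)| ≤ 1 := by
    intro x
    calc |∫ y in Ω, Kh (x - y) * (v x - v y)| ≤ ∫ y in Ω, |Kh (x - y) * (v x - v y)| :=
          abs_int_le _ _
      _ ≤ ∫ y in Ω, Kh (x - y) := by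
          refine integral_mono (hTd x).restrict.abs (hTint x).restrict (fun y => ?_)
          rw [abs_mul, abs_of_nonneg (hKh0 _)]
          exact mul_le_of_le_one_right (hKh0 _)
            (abs_le.2 ⟨by linarith [hv0 x, hv1 y], by linarith [hv1 x, hv0 y]⟩)
      _ ≤ ∫ y, Kh (x - y) := setIntegral_le_integral (hTint x) (ae_of_all _ fun y => hKh0 _)
      _ = 1 := hT1 x
  have hJ2m : Measurable fun x => ∫ y in Ω, Kh (x - y) * (v x - v y) := by
    have : StronglyMeasurable fun p : EuclideanSpace ℝ (Fin d) × EuclideanSpace ℝ (Fin d) =>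
        Kh (p.1 - p.2) * (v p.1 - v p.2) :=
      ((hKhm.comp (measurable_fst.sub measurable_snd)).mul
        ((hvm.comp measurable_fst).sub (hvm.comp measurable_snd))).stronglyMeasurable
    exact this.integral_prod_right'.measurable
  -- bounds for third inner integral
  have hJ3nn : ∀ x, 0 ≤ ∫ y in Ωᶜ, Kh (x - y) * v x := fun x =>
    integral_nonneg fun y => mul_nonneg (hKh0 _) (hv0 _)
  have hJ3int : ∀ x, Integrable (fun y => Kh (x - y) * v x) (volume.restrict Ωᶜ) := fun x =>
    ((hTint x).mul_const _).restrict
  have hJ3le : ∀ x, (∫ y in Ωᶜ, Kh (x - y) * v x) ≤ 1 := by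
    intro x
    calc (∫ y in Ωᶜ, Kh (x - y) * v x) ≤ ∫ y in Ωᶜ, Kh (x - y) :=
          integral_mono (hJ3int x) (hTint x).restrict
            (fun y => mul_le_of_le_one_right (hKh0 _) (hv1 x))
      _ ≤ ∫ y, Kh (x - y) := setIntegral_le_integral (hTint x) (ae_of_all _ fun y => hKh0 _)
      _ = 1 := hT1 x
  have hJ3m : Measurable fun x => ∫ y in Ωᶜ, Kh (x - y) * v x := by
    have : StronglyMeasurable fun p : EuclideanSpace ℝ (Fin d) × EuclideanSpace ℝ (Fin d) =>
        Kh (p.1 - p.2) * v p.1 :=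
      ((hKhm.comp (measurable_fst.sub measurable_snd)).mul
        (hvm.comp measurable_fst)).stronglyMeasurable
    exact this.integral_prod_right'.measurable
  -- integrabilities over Ω
  have hf1int : Integrable (fun x => (1 - v x) * convK Kh v x) (volume.restrict Ω) := by
    refine bddInt _ ((measurable_const.sub hvm).mul hconvm) (fun x => ?_)
    rw [abs_mul]
    refine mul_le_one₀ (abs_le.2 ⟨by linarith [hv1 x], by linarith [hv0 x]⟩) (abs_nonneg _)
      (abs_le.2 ⟨by linarith [hconv0 x], hconv1 x⟩)
  have hf2int : Integrable
      (fun x => (1 - v x) * ∫ y in Ω, Kh (x - y) * (v x - v y)) (volume.restrict Ω) := by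
    refine bddInt _ ((measurable_const.sub hvm).mul hJ2m) (fun x => ?_)
    rw [abs_mul]
    exact mul_le_one₀ (abs_le.2 ⟨by linarith [hv1 x], by linarith [hv0 x]⟩) (abs_nonneg _)
      (hJ2abs x)
  have hf3int : Integrable
      (fun x => (1 - v x) * ∫ y in Ωᶜ, Kh (x - y) * v x) (volume.restrict Ω) := by
    refine bddInt _ ((measurable_const.sub hvm).mul hJ3m) (fun x => ?_)
    rw [abs_mul]
    exact mul_le_one₀ (abs_le.2 ⟨by linarith [hv1 x], by linarith [hv0 x]⟩) (abs_nonneg _)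
      (abs_le.2 ⟨by linarith [hJ3nn x], hJ3le x⟩)
  -- split the target integral
  have hsplitInt : (∫ x in Ω, v x * (1 - v x))
      = (∫ x in Ω, (1 - v x) * convK Kh v x)
        + (∫ x in Ω, (1 - v x) * ∫ y in Ω, Kh (x - y) * (v x - v y))
        + (∫ x in Ω, (1 - v x) * ∫ y in Ωᶜ, Kh (x - y) * v x) := by
    calc (∫ x in Ω, v x * (1 - v x))
        = ∫ x in Ω, ((1 - v x) * convK Kh v x
            + (1 - v x) * (∫ y in Ω, Kh (x - y) * (v x - v y))
            + (1 - v x) * ∫ y in Ωᶜ, Kh (x - y) * v x) :=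
          integral_congr_ae (ae_of_all _ fun x => keyInt x)
      _ = _ := by
          have e2 : (∫ x in Ω, (((1 - v x) * convK Kh v x
                + (1 - v x) * (∫ y in Ω, Kh (x - y) * (v x - v y)))
                + (1 - v x) * ∫ y in Ωᶜ, Kh (x - y) * v x))
              = (∫ x in Ω, ((1 - v x) * convK Kh v x
                + (1 - v x) * (∫ y in Ω, Kh (x - y) * (v x - v y))))
                + ∫ x in Ω, (1 - v x) * ∫ y in Ωᶜ, Kh (x - y) * v x :=
            integral_add (hf1int.add hf2int) hf3int
          have e3 : (∫ x in Ω, ((1 - v x) * convK Kh v x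
                + (1 - v x) * (∫ y in Ω, Kh (x - y) * (v x - v y))))
              = (∫ x in Ω, (1 - v x) * convK Kh v x)
                + ∫ x in Ω, (1 - v x) * (∫ y in Ω, Kh (x - y) * (v x - v y)) :=
            integral_add hf1int hf2int
          rw [e2, e3]
  -- first term bound
  have hB1 : (∫ x in Ω, (1 - v x) * convK Kh v x) ≤ C1 * Real.sqrt h := by
    have h' := mul_le_mul_of_nonneg_left hE1 hs0.le
    rw [← mul_assoc, mul_inv_cancel₀ hs0.ne', one_mul] at h'
    linarith
  -- third term bound
  have hJ3eq : ∀ x, (∫ y in Ωᶜ, Kh (x - y) * v x)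
      = ∫ y, Set.indicator Ωᶜ 1 (x + y) * Kh y * v x := by
    intro x
    rw [← integral_indicator hΩm.compl]
    rw [← integral_add_left_eq_self
      (fun y => Set.indicator Ωᶜ (fun z => Kh (x - z) * v x) y) x]
    congr 1
    funext y
    by_cases hxy : x + y ∈ Ωᶜ
    · rw [Set.indicator_of_mem hxy, Set.indicator_of_mem hxy]
      have : x - (x + y) = -y := by abel
      rw [this, hKhe]
      simp
    · rw [Set.indicator_of_notMem hxy, Set.indicator_of_notMem hxy]
      simp
  have hB3 : (∫ x in Ω, (1 - v x) * ∫ y in Ωᶜ, Kh (x - y) * v x) ≤ C2 * Real.sqrt h := by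
    simp_rw [← hJ3eq] at hE2
    have hmono : (∫ x in Ω, (1 - v x) * ∫ y in Ωᶜ, Kh (x - y) * v x)
        ≤ ∫ x in Ω, ∫ y in Ωᶜ, Kh (x - y) * v x := by
      refine integral_mono hf3int
        (bddInt _ hJ3m (fun x => abs_le.2 ⟨by linarith [hJ3nn x], hJ3le x⟩)) (fun x => ?_)
      exact mul_le_of_le_one_left (hJ3nn x) (by linarith [hv0 x])
    have h' : (∫ x in Ω, ∫ y in Ωᶜ, Kh (x - y) * v x) ≤ C2 * Real.sqrt h := by
      have h'' := mul_le_mul_of_nonneg_left hE2 hs0.le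
      rw [← mul_assoc, mul_inv_cancel₀ hs0.ne', one_mul] at h''
      linarith
    linarith
  -- second term nonpositive via symmetrization
  have hB2 : (∫ x in Ω, (1 - v x) * ∫ y in Ω, Kh (x - y) * (v x - v y)) ≤ 0 := by
    set F : EuclideanSpace ℝ (Fin d) → EuclideanSpace ℝ (Fin d) → ℝ :=
      fun x y => (1 - v x) * (Kh (x - y) * (v x - v y)) with hF
    have hFm : Measurable (Function.uncurry F) := by
      unfold F
      exact ((measurable_const.sub (hvm.comp measurable_fst)).mul
        ((hKhm.comp (measurable_fst.sub measurable_snd)).mul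
          ((hvm.comp measurable_fst).sub (hvm.comp measurable_snd))))
    have hFabs : ∀ x y, |F x y| ≤ Kh (x - y) := by
      intro x y
      unfold F
      rw [abs_mul, abs_mul, abs_of_nonneg (hKh0 _)]
      have h1 : |1 - v x| ≤ 1 := abs_le.2 ⟨by linarith [hv1 x], by linarith [hv0 x]⟩
      have h2 : |v x - v y| ≤ 1 := abs_le.2 ⟨by linarith [hv0 x, hv1 y], by linarith [hv1 x, hv0 y]⟩
      nlinarith [hKh0 (x - y), abs_nonneg (1 - v x), abs_nonneg (v x - v y), h1, h2,
        mul_le_of_le_one_right (hKh0 (x - y)) h2,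
        mul_nonneg (hKh0 (x - y)) (abs_nonneg (v x - v y))]
    have hFr : ∀ x, Integrable (fun y => F x y) (volume.restrict Ω) := fun x =>
      ((hTd x).restrict.const_mul _)
    have hFl : ∀ x, Integrable (fun y => F y x) (volume.restrict Ω) := by
      intro x
      refine Integrable.mono' (hTint' x).restrict ?_ (ae_of_all _ fun y => ?_)
      · exact (hFm.comp (measurable_id.prodMk measurable_const)).aestronglyMeasurable
      · simpa [Real.norm_eq_abs] using
          (hFabs y x).trans (le_of_eq (by rw [← neg_sub x y, hKhe]))
    have hFabsInt : ∀ x, (∫ y in Ω, |F x y|) ≤ 1 := by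
      intro x
      calc (∫ y in Ω, |F x y|) ≤ ∫ y in Ω, Kh (x - y) :=
            integral_mono (hFr x).abs (hTint x).restrict (fun y => hFabs x y)
        _ ≤ ∫ y, Kh (x - y) := setIntegral_le_integral (hTint x)
            (ae_of_all _ fun y => hKh0 _)
        _ = 1 := hT1 x
    have hFprod : Integrable (Function.uncurry F)
        ((volume.restrict Ω).prod (volume.restrict Ω)) := by
      rw [integrable_prod_iff hFm.aestronglyMeasurable]
      refine ⟨ae_of_all _ fun x => hFr x, ?_⟩
      refine bddInt _ ?_ (fun x => ?_)
      · exact hFm.norm.stronglyMeasurable.integral_prod_right'.measurable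
      · rw [abs_of_nonneg (integral_nonneg fun y => norm_nonneg _)]
        simpa [Real.norm_eq_abs] using hFabsInt x
    have hswap : (∫ x in Ω, ∫ y in Ω, F x y) = ∫ x in Ω, ∫ y in Ω, F y x :=
      integral_integral_swap hFprod
    have hGr : Integrable (fun x => ∫ y in Ω, F x y) (volume.restrict Ω) := by
      refine bddInt _ ?_ (fun x => ?_)
      · exact hFm.stronglyMeasurable.integral_prod_right'.measurable
      · calc |∫ y in Ω, F x y| ≤ ∫ y in Ω, |F x y| := abs_int_le _ _
          _ ≤ 1 := hFabsInt x
    have hGl : Integrable (fun x => ∫ y in Ω, F y x) (volume.restrict Ω) := by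
      refine bddInt _ ?_ (fun x => ?_)
      · exact hFm.stronglyMeasurable.integral_prod_left'.measurable
      · calc |∫ y in Ω, F y x| ≤ ∫ y in Ω, |F y x| := abs_int_le _ _
          _ ≤ ∫ y in Ω, Kh (y - x) := integral_mono (hFl x).abs (hTint' x).restrict
              (fun y => hFabs y x)
          _ ≤ ∫ y, Kh (y - x) := setIntegral_le_integral (hTint' x)
              (ae_of_all _ fun y => hKh0 _)
          _ = 1 := by rw [integral_sub_right_eq_self Kh x, hKh1]
    have hA2 : (∫ x in Ω, ∫ y in Ω, F x y) + (∫ x in Ω, ∫ y in Ω, F x y)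
        = ∫ x in Ω, ((∫ y in Ω, F x y) + (∫ y in Ω, F y x)) := by
      rw [integral_add hGr hGl]
      rw [← hswap]
    have hinner : ∀ x, ((∫ y in Ω, F x y) + (∫ y in Ω, F y x)) ≤ 0 := by
      intro x
      rw [← integral_add (hFr x) (hFl x)]
      refine integral_nonpos (fun y => ?_)
      have he : Kh (y - x) = Kh (x - y) := by rw [← neg_sub x y, hKhe]
      show F x y + F y x ≤ (0:ℝ)
      simp only [hF]
      rw [he]
      nlinarith [mul_nonneg (hKh0 (x - y)) (sq_nonneg (v x - v y))]
    have hAneg : (∫ x in Ω, ∫ y in Ω, F x y) + (∫ x in Ω, ∫ y in Ω, F x y) ≤ 0 := by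
      rw [hA2]
      exact integral_nonpos (fun x => hinner x)
    have heq : (∫ x in Ω, (1 - v x) * ∫ y in Ω, Kh (x - y) * (v x - v y))
        = ∫ x in Ω, ∫ y in Ω, F x y := by
      refine integral_congr_ae (ae_of_all _ fun x => ?_)
      show (1 - v x) * (∫ y in Ω, Kh (x - y) * (v x - v y)) = ∫ y in Ω, F x y
      simp only [hF]
      exact (integral_const_mul _ _).symm
    linarith
  rw [hsplitInt]
  nlinarith [hs0.le]
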